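/- Mirror-descent guarantee for the Hedge algorithm: let η > 0, let T ≥ 1, and run the Hedge algorithm where in every round t ∈ {1,…,T} the point θ_t is a best response to p_t. Then f(p̄_T) ≤ (1/T)·Σ_{t=1}^T R(p_t,θ_t) ≤ v̄ + η·M²/2 + ln(I)/(T·η), where p̄_T = (1/T)·Σ_{t=1}^T p_t and v̄ = inf_{p∈Δ} f(p). -/

import Mathlib

open Finset

lemma exp_neg_le_quad (x : ℝ) (hx : 0 ≤ x) : Real.exp (-x) ≤ 1 - x + x ^ 2 / 2 := by
  have key : ∀ y : ℝ, HasDerivAt (fun z : ℝ => 1 - z + z ^ 2 / 2 - Real.exp (-z))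
      (-1 + y + Real.exp (-y)) y := by
    intro y
    have h1 : HasDerivAt (fun z : ℝ => Real.exp (-z)) (-Real.exp (-y)) y := by
      simpa using (hasDerivAt_neg' y).exp
    have h2 : HasDerivAt (fun z : ℝ => 1 - z + z ^ 2 / 2) (-1 + y) y := by
      have : HasDerivAt (fun z : ℝ => z ^ 2 / 2) y y := by
        simpa using (hasDerivAt_pow 2 y).div_const 2
      exact ((hasDerivAt_id' y).const_sub (1:ℝ)).add this
    have h3 := h2.sub h1
    rw [sub_neg_eq_add] at h3
    exact h3
  have mono : MonotoneOn (fun z : ℝ => 1 - z + z ^ 2 / 2 - Real.exp (-z)) (Set.Ici 0) := by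
    apply monotoneOn_of_deriv_nonneg (convex_Ici 0)
    · exact fun y _ => ((key y).differentiableAt).continuousAt.continuousWithinAt
    · intro y hy
      exact (key y).differentiableAt.differentiableWithinAt
    · intro y hy
      rw [(key y).deriv]
      have := Real.add_one_le_exp (-y)
      linarith
  have h0 := mono (Set.self_mem_Ici) (Set.mem_Ici.mpr hx) hx
  simp only [Real.exp_zero] at h0
  norm_num at h0
  linarith


/-- Mirror-descent guarantee for Hedge: running Hedge against best responses,
`f(p̄_T) ≤ (1/T) Σ_t R(p_t,θ_t) ≤ v̄ + η M²/2 + ln I/(T η)`. -/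
theorem hedge_mirror_descent_guarantee
    (I : ℕ) (hI : 0 < I) (Θ : Type*) [Nonempty Θ] (M : ℝ) (hM : 0 < M)
    (R : Fin I → Θ → ℝ) (hR : ∀ i θ, 0 ≤ R i θ ∧ R i θ ≤ M)
    (η : ℝ) (hη : 0 < η) (T : ℕ) (hT : 1 ≤ T)
    (θ : ℕ → Θ) (w : ℕ → Fin I → ℝ) (p : ℕ → Fin I → ℝ)
    (hw0 : ∀ i, w 0 i = 1)
    (hw : ∀ t i, w (t + 1) i = w t i * Real.exp (-η * R i (θ (t + 1))))
    (hp : ∀ t i, p (t + 1) i = w t i / ∑ j, w t j)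
    (hbr : ∀ t ∈ Finset.Icc 1 T,
      ∑ i, p t i * R i (θ t) = ⨆ θ' : Θ, ∑ i, p t i * R i θ') :
    (⨆ θ' : Θ, ∑ i, ((1 / (T : ℝ)) * ∑ t ∈ Finset.Icc 1 T, p t i) * R i θ')
        ≤ (1 / (T : ℝ)) * ∑ t ∈ Finset.Icc 1 T, ∑ i, p t i * R i (θ t)
      ∧ (1 / (T : ℝ)) * ∑ t ∈ Finset.Icc 1 T, ∑ i, p t i * R i (θ t)
        ≤ sInf {v : ℝ | ∃ q : Fin I → ℝ, (∀ i, 0 ≤ q i) ∧ ∑ i, q i = 1 ∧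
              v = ⨆ θ' : Θ, ∑ i, q i * R i θ'}
          + η * M ^ 2 / 2 + Real.log I / ((T : ℝ) * η) := by
  haveI : Nonempty (Fin I) := ⟨⟨0, hI⟩⟩
  have hT0 : (0:ℝ) < T := by exact_mod_cast hT
  have hTinv : (0:ℝ) < 1 / T := by positivity
  -- positivity of weights
  have hwpos : ∀ t i, 0 < w t i := by
    intro t
    induction t with
    | zero => intro i; rw [hw0]; norm_num
    | succ n ih => intro i; rw [hw]; exact mul_pos (ih i) (Real.exp_pos _)
  have hWpos : ∀ t, 0 < ∑ j, w t j := fun t =>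
    Finset.sum_pos (fun i _ => hwpos t i) ⟨Classical.arbitrary _, Finset.mem_univ _⟩
  have hpnn : ∀ t i, 0 ≤ p (t + 1) i := by
    intro t i; rw [hp]; exact div_nonneg (hwpos t i).le (hWpos t).le
  have hpsum : ∀ t, ∑ i, p (t + 1) i = 1 := by
    intro t
    simp only [hp]
    rw [← Finset.sum_div, div_self (hWpos t).ne']
  -- nonnegativity / sum-1 at every t ∈ Icc 1 T
  have hpnn' : ∀ t ∈ Finset.Icc 1 T, ∀ i, 0 ≤ p t i := by
    intro t ht i
    obtain ⟨s, rfl⟩ := Nat.exists_eq_add_of_le (Finset.mem_Icc.mp ht).1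
    simpa [Nat.add_comm] using hpnn s i
  have hpsum' : ∀ t ∈ Finset.Icc 1 T, ∑ i, p t i = 1 := by
    intro t ht
    obtain ⟨s, rfl⟩ := Nat.exists_eq_add_of_le (Finset.mem_Icc.mp ht).1
    simpa [Nat.add_comm] using hpsum s
  -- boundedness of payoff functions for simplex points
  have hbdd : ∀ q : Fin I → ℝ, (∀ i, 0 ≤ q i) → ∑ i, q i = 1 →
      BddAbove (Set.range fun θ' : Θ => ∑ i, q i * R i θ') := by
    intro q hq hq1
    refine ⟨M, ?_⟩
    rintro _ ⟨θ', rfl⟩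
    calc ∑ i, q i * R i θ' ≤ ∑ i, q i * M :=
          Finset.sum_le_sum fun i _ => mul_le_mul_of_nonneg_left (hR i θ').2 (hq i)
      _ = M := by rw [← Finset.sum_mul, hq1, one_mul]
  -- Part 1
  have part1 : (⨆ θ' : Θ, ∑ i, ((1 / (T : ℝ)) * ∑ t ∈ Finset.Icc 1 T, p t i) * R i θ')
      ≤ (1 / (T : ℝ)) * ∑ t ∈ Finset.Icc 1 T, ∑ i, p t i * R i (θ t) := by
    apply ciSup_le
    intro θ'
    have : ∑ i, ((1 / (T : ℝ)) * ∑ t ∈ Finset.Icc 1 T, p t i) * R i θ'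
        = (1 / (T : ℝ)) * ∑ t ∈ Finset.Icc 1 T, ∑ i, p t i * R i θ' := by
      calc ∑ i, ((1 / (T : ℝ)) * ∑ t ∈ Finset.Icc 1 T, p t i) * R i θ'
          = ∑ i, (1 / (T : ℝ)) * ∑ t ∈ Finset.Icc 1 T, p t i * R i θ' := by
            refine Finset.sum_congr rfl fun i _ => ?_
            rw [mul_assoc, Finset.sum_mul]
        _ = (1 / (T : ℝ)) * ∑ i : Fin I, ∑ t ∈ Finset.Icc 1 T, p t i * R i θ' := by
            rw [Finset.mul_sum]
        _ = (1 / (T : ℝ)) * ∑ t ∈ Finset.Icc 1 T, ∑ i, p t i * R i θ' := by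
            rw [Finset.sum_comm]
    rw [this]
    apply mul_le_mul_of_nonneg_left _ hTinv.le
    apply Finset.sum_le_sum
    intro t ht
    rw [hbr t ht]
    exact le_ciSup (hbdd _ (hpnn' t ht) (hpsum' t ht)) θ'
  refine ⟨part1, ?_⟩
  -- Part 2 : the Hedge regret bound
  set L : ℝ := ∑ t ∈ Finset.Icc 1 T, ∑ i, p t i * R i (θ t) with hL
  -- log-sum step inequality
  have hstep : ∀ t, Real.log (∑ j, w (t+1) j)
      ≤ Real.log (∑ j, w t j) + (-η * ∑ i, p (t+1) i * R i (θ (t+1)) + η^2 * M^2 / 2) := by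
    intro t
    have hsplit : ∑ j, w (t+1) j = (∑ j, w t j) * ∑ i, p (t+1) i * Real.exp (-η * R i (θ (t+1))) := by
      rw [Finset.mul_sum]
      apply Finset.sum_congr rfl
      intro i _
      rw [hw, hp]
      field_simp [(hWpos t).ne']
    have hSle : ∑ i, p (t+1) i * Real.exp (-η * R i (θ (t+1)))
        ≤ Real.exp (-η * ∑ i, p (t+1) i * R i (θ (t+1)) + η^2 * M^2 / 2) := by
      have h1 : ∑ i, p (t+1) i * Real.exp (-η * R i (θ (t+1)))
          ≤ 1 + (-η * ∑ i, p (t+1) i * R i (θ (t+1)) + η^2 * M^2 / 2) := by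
        have : ∀ i : Fin I, p (t+1) i * Real.exp (-η * R i (θ (t+1)))
            ≤ p (t+1) i * (1 - η * R i (θ (t+1)) + η^2 * M^2 / 2) := by
          intro i
          apply mul_le_mul_of_nonneg_left _ (hpnn t i)
          have hr := hR i (θ (t+1))
          have hq := exp_neg_le_quad (η * R i (θ (t+1))) (mul_nonneg hη.le hr.1)
          have hsq : (η * R i (θ (t+1))) ^ 2 ≤ η ^ 2 * M ^ 2 := by
            rw [mul_pow]
            apply mul_le_mul_of_nonneg_left _ (by positivity)
            exact pow_le_pow_left₀ hr.1 hr.2 2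
          calc Real.exp (-η * R i (θ (t+1))) = Real.exp (-(η * R i (θ (t+1)))) := by ring_nf
            _ ≤ 1 - η * R i (θ (t+1)) + (η * R i (θ (t+1)))^2 / 2 := hq
            _ ≤ 1 - η * R i (θ (t+1)) + η^2 * M^2 / 2 := by linarith
        calc ∑ i, p (t+1) i * Real.exp (-η * R i (θ (t+1)))
            ≤ ∑ i, p (t+1) i * (1 - η * R i (θ (t+1)) + η^2 * M^2 / 2) :=
              Finset.sum_le_sum fun i _ => this i
          _ = 1 + (-η * ∑ i, p (t+1) i * R i (θ (t+1)) + η^2 * M^2 / 2) := by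
              have hmid : ∑ i, p (t+1) i * (η * R i (θ (t+1)))
                  = η * ∑ i, p (t+1) i * R i (θ (t+1)) := by
                rw [Finset.mul_sum]
                exact Finset.sum_congr rfl fun i _ => by ring
              simp only [mul_sub, mul_add, mul_one, Finset.sum_add_distrib,
                Finset.sum_sub_distrib]
              rw [hmid, ← Finset.sum_mul, hpsum t]
              ring
      calc ∑ i, p (t+1) i * Real.exp (-η * R i (θ (t+1)))
          ≤ 1 + (-η * ∑ i, p (t+1) i * R i (θ (t+1)) + η^2 * M^2 / 2) := h1
        _ ≤ Real.exp (-η * ∑ i, p (t+1) i * R i (θ (t+1)) + η^2 * M^2 / 2) := by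
            have := Real.add_one_le_exp (-η * ∑ i, p (t+1) i * R i (θ (t+1)) + η^2 * M^2 / 2)
            linarith
    have hSpos : 0 < ∑ i, p (t+1) i * Real.exp (-η * R i (θ (t+1))) := by
      apply Finset.sum_pos
      · intro i _
        apply mul_pos _ (Real.exp_pos _)
        rw [hp]; exact div_pos (hwpos t i) (hWpos t)
      · exact ⟨Classical.arbitrary _, Finset.mem_univ _⟩
    rw [hsplit, Real.log_mul (hWpos t).ne' hSpos.ne']
    have : Real.log (∑ i, p (t+1) i * Real.exp (-η * R i (θ (t+1))))
        ≤ -η * ∑ i, p (t+1) i * R i (θ (t+1)) + η^2 * M^2 / 2 := by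
      rw [← Real.log_exp (-η * ∑ i, p (t+1) i * R i (θ (t+1)) + η^2 * M^2 / 2)]
      exact Real.log_le_log hSpos hSle
    linarith
  -- telescoped
  have htel : ∀ n : ℕ, Real.log (∑ j, w n j)
      ≤ Real.log (∑ j, w 0 j) - η * (∑ t ∈ Finset.Icc 1 n, ∑ i, p t i * R i (θ t))
        + n * (η^2 * M^2 / 2) := by
    intro n
    induction n with
    | zero => simp
    | succ m ih =>
      have := hstep m
      rw [Finset.sum_Icc_succ_top (Nat.le_add_left 1 m)]
      push_cast
      calc Real.log (∑ j, w (m+1) j)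
          ≤ Real.log (∑ j, w m j) + (-η * ∑ i, p (m+1) i * R i (θ (m+1)) + η^2 * M^2 / 2) := this
        _ ≤ _ := by
          have h2 : Real.log (∑ j, w m j) ≤ Real.log (∑ j, w 0 j)
              - η * (∑ t ∈ Finset.Icc 1 m, ∑ i, p t i * R i (θ t)) + m * (η^2 * M^2 / 2) := ih
          have hmm : (0:ℝ) ≤ η^2 * M^2 / 2 := by positivity
          ring_nf
          ring_nf at h2 ⊢
          nlinarith [h2]
  -- closed form of weights
  have hwform : ∀ n : ℕ, ∀ i, w n i = Real.exp (-η * ∑ t ∈ Finset.Icc 1 n, R i (θ t)) := by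
    intro n
    induction n with
    | zero => intro i; simp [hw0]
    | succ m ih =>
      intro i
      rw [hw, ih i, ← Real.exp_add, Finset.sum_Icc_succ_top (Nat.le_add_left 1 m)]
      ring_nf
  -- W 0 = I
  have hW0 : Real.log (∑ j, w 0 j) = Real.log I := by
    simp [hw0]
  -- lower bound on log W T
  have hlow : ∀ i, -η * ∑ t ∈ Finset.Icc 1 T, R i (θ t) ≤ Real.log (∑ j, w T j) := by
    intro i
    have h1 : w T i ≤ ∑ j, w T j :=
      Finset.single_le_sum (fun j _ => (hwpos T j).le) (Finset.mem_univ i)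
    calc -η * ∑ t ∈ Finset.Icc 1 T, R i (θ t)
        = Real.log (w T i) := by rw [hwform T i, Real.log_exp]
      _ ≤ Real.log (∑ j, w T j) := Real.log_le_log (hwpos T i) h1
  -- key bound: L ≤ S i + T η M²/2 + log I / η for every i
  have hkey : ∀ i, L ≤ (∑ t ∈ Finset.Icc 1 T, R i (θ t)) + T * (η * M^2 / 2) + Real.log I / η := by
    intro i
    have h1 := (hlow i).trans (htel T)
    rw [hW0] at h1
    -- -η S ≤ log I - η L + T (η² M²/2)
    have h2 : η * L ≤ η * ((∑ t ∈ Finset.Icc 1 T, R i (θ t)) + T * (η * M^2 / 2) + Real.log I / η) := by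
      have : η * (Real.log I / η) = Real.log I := by field_simp
      nlinarith [h1]
    exact le_of_mul_le_mul_left h2 hη
  -- for any simplex point q
  have hq : ∀ q : Fin I → ℝ, (∀ i, 0 ≤ q i) → ∑ i, q i = 1 →
      (1 / (T:ℝ)) * L ≤ (⨆ θ' : Θ, ∑ i, q i * R i θ') + η * M^2 / 2 + Real.log I / (T * η) := by
    intro q hqn hq1
    have h1 : L ≤ (∑ i, q i * ∑ t ∈ Finset.Icc 1 T, R i (θ t)) + T * (η * M^2 / 2) + Real.log I / η := by
      have : L = ∑ i, q i * L := by rw [← Finset.sum_mul, hq1, one_mul]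
      calc L = ∑ i, q i * L := this
        _ ≤ ∑ i, q i * ((∑ t ∈ Finset.Icc 1 T, R i (θ t)) + T * (η * M^2 / 2) + Real.log I / η) :=
            Finset.sum_le_sum fun i _ => mul_le_mul_of_nonneg_left (hkey i) (hqn i)
        _ = (∑ i, q i * ∑ t ∈ Finset.Icc 1 T, R i (θ t)) + T * (η * M^2 / 2) + Real.log I / η := by
            simp only [mul_add]
            rw [Finset.sum_add_distrib, Finset.sum_add_distrib, ← Finset.sum_mul,
              ← Finset.sum_mul, hq1, one_mul, one_mul]
    have h2 : ∑ i, q i * ∑ t ∈ Finset.Icc 1 T, R i (θ t)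
        ≤ T * ⨆ θ' : Θ, ∑ i, q i * R i θ' := by
      have hswap : ∑ i, q i * ∑ t ∈ Finset.Icc 1 T, R i (θ t)
          = ∑ t ∈ Finset.Icc 1 T, ∑ i, q i * R i (θ t) := by
        rw [Finset.sum_comm]
        apply Finset.sum_congr rfl
        intro i _
        rw [Finset.mul_sum]
      rw [hswap]
      calc ∑ t ∈ Finset.Icc 1 T, ∑ i, q i * R i (θ t)
          ≤ ∑ t ∈ Finset.Icc 1 T, ⨆ θ' : Θ, ∑ i, q i * R i θ' :=
            Finset.sum_le_sum fun t _ => le_ciSup (hbdd q hqn hq1) (θ t)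
        _ = T * ⨆ θ' : Θ, ∑ i, q i * R i θ' := by
            rw [Finset.sum_const, Nat.card_Icc]
            simp [nsmul_eq_mul]
    have h3 : L ≤ T * (⨆ θ' : Θ, ∑ i, q i * R i θ') + T * (η * M^2 / 2) + Real.log I / η := by
      linarith
    have h4 : (1 / (T:ℝ)) * L ≤ (1 / (T:ℝ)) * (T * (⨆ θ' : Θ, ∑ i, q i * R i θ')
        + T * (η * M^2 / 2) + Real.log I / η) := by
      exact mul_le_mul_of_nonneg_left h3 hTinv.le
    calc (1 / (T:ℝ)) * L ≤ _ := h4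
      _ = (⨆ θ' : Θ, ∑ i, q i * R i θ') + η * M^2 / 2 + Real.log I / (T * η) := by
        field_simp
  -- conclude via sInf
  set S : Set ℝ := {v : ℝ | ∃ q : Fin I → ℝ, (∀ i, 0 ≤ q i) ∧ ∑ i, q i = 1 ∧
      v = ⨆ θ' : Θ, ∑ i, q i * R i θ'} with hS
  have hSne : S.Nonempty := by
    refine ⟨⨆ θ' : Θ, ∑ i, (fun _ : Fin I => (I:ℝ)⁻¹) i * R i θ',
      fun _ => (I:ℝ)⁻¹, fun i => by positivity, ?_, rfl⟩
    simp [Finset.sum_const, Finset.card_univ]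
    field_simp
  have hle : (1 / (T:ℝ)) * L - (η * M^2 / 2 + Real.log I / (T * η)) ≤ sInf S := by
    apply le_csInf hSne
    rintro v ⟨q, hqn, hq1, rfl⟩
    have := hq q hqn hq1
    linarith
  linarith
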